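/- Suppose g ≥ 13, ((g/π)·γ₁)² ≤ 1/(500g), and 1/2 ≤ (g/π)·γ₂ ≤ 2. Then 5·γ₁²·G < 1, where G := 1/6 − 1/(2γ₁²) + (1/2)·(sin γ₁)^{−2} + (1/2) Σ_{ε ∈ {±1}} Σ_{j=2}^{g} (sin((γ₁ + ε γ_j)/2))^{−2}. -/

import Mathlib

set_option maxHeartbeats 1000000


open Real

lemma csc_sq_bound (a b : ℝ) (ha : 0 < a) (hab : a < b) (hb : b < π) (ε : ℝ)
    (hε : ε = 1 ∨ ε = -1) :
    (Real.sin ((a + ε * b) / 2) ^ 2)⁻¹ ≤ (π / (b - a)) ^ 2 := by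
  have hπ := Real.pi_pos
  have hd : 0 < b - a := sub_pos.2 hab
  have hmain : (b - a) / π ≤ Real.sin ((b - a) / 2) := by
    have := Real.mul_le_sin (x := (b - a) / 2) (by linarith) (by linarith)
    calc (b - a) / π = 2 / π * ((b - a) / 2) := by ring
      _ ≤ _ := this
  have hsq : ((b - a) / π) ^ 2 ≤ Real.sin ((a + ε * b) / 2) ^ 2 := by
    rcases hε with rfl | rfl
    · have h2 : (b - a) / π ≤ Real.sin ((a + 1 * b) / 2) := by
        rcases le_or_gt ((a + 1 * b) / 2) (π / 2) with hc | hc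
        · refine hmain.trans ?_
          exact Real.sin_le_sin_of_le_of_le_pi_div_two (by linarith) hc (by linarith)
        · have : Real.sin ((a + 1 * b) / 2) = Real.sin (π - (a + 1 * b) / 2) := by
            rw [Real.sin_pi_sub]
          rw [this]
          refine hmain.trans ?_
          exact Real.sin_le_sin_of_le_of_le_pi_div_two (by linarith) (by linarith)
            (by linarith)
      exact pow_le_pow_left₀ (by positivity) h2 2
    · have : Real.sin ((a + (-1) * b) / 2) ^ 2 = Real.sin ((b - a) / 2) ^ 2 := by
        rw [show (a + (-1) * b) / 2 = -((b - a) / 2) by ring, Real.sin_neg, neg_sq]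
      rw [this]
      exact pow_le_pow_left₀ (by positivity) hmain 2
  calc (Real.sin ((a + ε * b) / 2) ^ 2)⁻¹ ≤ (((b - a) / π) ^ 2)⁻¹ :=
        inv_anti₀ (by positivity) hsq
    _ = (π / (b - a)) ^ 2 := by rw [← inv_pow, inv_div]

/-- If `g ≥ 13`, the rescaled first zero satisfies `((g/π)γ₁)² ≤ 1/(500g)` and the
rescaled second zero satisfies `1/2 ≤ (g/π)γ₂ ≤ 2`, then `5γ₁²G < 1`, where
`G = 1/6 - 1/(2γ₁²) + (1/2) csc² γ₁ + (1/2) ∑_{ε ∈ {±1}} ∑_{j=2}^g csc²((γ₁ + ε γ_j)/2)`. -/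
theorem five_gamma_sq_G_lt_one (g : ℕ) (hg : 13 ≤ g) (γ : ℕ → ℝ)
    (hpos : 0 < γ 1)
    (hmono : ∀ j : ℕ, 1 ≤ j → j < g → γ j < γ (j + 1))
    (hlt : γ g < π)
    (h1 : ((g / π) * γ 1) ^ 2 ≤ 1 / (500 * g))
    (h2 : 1 / 2 ≤ (g / π) * γ 2) (h2' : (g / π) * γ 2 ≤ 2) :
    5 * γ 1 ^ 2 *
        (1 / 6 - 1 / (2 * γ 1 ^ 2) + (1 / 2) * (Real.sin (γ 1) ^ 2)⁻¹ +
          (1 / 2) * ∑ ε ∈ ({1, -1} : Finset ℝ), ∑ j ∈ Finset.Icc 2 g,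
            (Real.sin ((γ 1 + ε * γ j) / 2) ^ 2)⁻¹) < 1 := by
  have hπ := Real.pi_pos
  have hG : (13 : ℝ) ≤ (g : ℝ) := by exact_mod_cast hg
  have hGpos : (0 : ℝ) < (g : ℝ) := by linarith
  have hπ2 : π ^ 2 ≤ 9.9225 := by nlinarith [Real.pi_lt_d2, Real.pi_pos]
  -- monotonicity of γ on [1, g]
  have hmono' : ∀ j k : ℕ, 1 ≤ j → j ≤ k → k ≤ g → γ j ≤ γ k := by
    intro j k hj hjk hkg
    induction k with
    | zero => omega
    | succ n ih =>
      rcases Nat.lt_or_ge j (n + 1) with h | h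
      · have h1 : γ j ≤ γ n := ih (by omega) (by omega)
        exact h1.trans (hmono n (by omega) (by omega)).le
      · have : j = n + 1 := by omega
        rw [this]
  -- rewrite h1: γ1² * (500 g³) ≤ π²
  have ht2 : γ 1 ^ 2 * (500 * (g : ℝ) ^ 3) ≤ π ^ 2 := by
    have he : ((g : ℝ) / π * γ 1) ^ 2 = (g : ℝ) ^ 2 * γ 1 ^ 2 / π ^ 2 := by ring
    rw [he, div_le_div_iff₀ (by positivity) (by positivity)] at h1
    nlinarith [h1]
  have hg3 : (2197 : ℝ) ≤ (g : ℝ) ^ 3 := by nlinarith [hG, sq_nonneg ((g:ℝ) - 13)]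
  have he5 : γ 1 ^ 2 ≤ 1 / 100000 := by
    nlinarith [mul_nonneg (sq_nonneg (γ 1)) (by linarith : (0:ℝ) ≤ (g:ℝ)^3 - 2197)]
  have hγ1le1 : γ 1 ≤ 1 := by nlinarith [he5, hpos]
  -- γ1 ≤ π / (80 g):  (80 g γ1)² ≤ 6400 g² γ1² ≤ 500 g³ γ1² ≤ π²
  have h80 : 80 * (g : ℝ) * γ 1 ≤ π := by
    have hsq : (80 * (g : ℝ) * γ 1) ^ 2 ≤ π ^ 2 := by
      nlinarith [mul_nonneg (mul_nonneg (sq_nonneg (γ 1)) (sq_nonneg ((g:ℝ))))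
        (by linarith : (0:ℝ) ≤ 500 * (g:ℝ) - 6400)]
    nlinarith [hsq, hπ, mul_nonneg (mul_nonneg (by norm_num : (0:ℝ) ≤ 80) hGpos.le) hpos.le]
  -- γ2 ≥ π/(2g):  π ≤ 2 g γ2
  have hγ2 : π ≤ 2 * (g : ℝ) * γ 2 := by
    rw [div_mul_eq_mul_div, le_div_iff₀ hπ] at h2
    linarith [h2]
  have ht12 : γ 1 < γ 2 := hmono 1 le_rfl (by omega)
  have hdpos : 0 < γ 2 - γ 1 := sub_pos.2 ht12
  -- 39 π ≤ 80 g (γ2 - γ1)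
  have hd39 : π * 39 ≤ 80 * (g : ℝ) * (γ 2 - γ 1) := by nlinarith [hγ2, h80]
  -- π/(γ2-γ1) ≤ 80g/39
  have hπd : π / (γ 2 - γ 1) ≤ 80 * (g : ℝ) / 39 := by
    rw [div_le_div_iff₀ hdpos (by norm_num)]
    linarith [hd39]
  have hK : (π / (γ 2 - γ 1)) ^ 2 ≤ (80 * (g : ℝ) / 39) ^ 2 :=
    pow_le_pow_left₀ (by positivity) hπd 2
  -- per-term bound
  have hterm : ∀ ε : ℝ, ε = 1 ∨ ε = -1 → ∀ j ∈ Finset.Icc 2 g,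
      (Real.sin ((γ 1 + ε * γ j) / 2) ^ 2)⁻¹ ≤ (π / (γ 2 - γ 1)) ^ 2 := by
    intro ε hε j hj
    rw [Finset.mem_Icc] at hj
    have h2j : γ 2 ≤ γ j := hmono' 2 j (by omega) hj.1 hj.2
    have hjg : γ j ≤ γ g := hmono' j g (by omega) hj.2 le_rfl
    have h1j : γ 1 < γ j := lt_of_lt_of_le ht12 h2j
    have hjπ : γ j < π := lt_of_le_of_lt hjg hlt
    refine (csc_sq_bound (γ 1) (γ j) hpos h1j hjπ ε hε).trans ?_
    have hdj : 0 < γ j - γ 1 := sub_pos.2 h1j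
    have : π / (γ j - γ 1) ≤ π / (γ 2 - γ 1) :=
      div_le_div_of_nonneg_left hπ.le hdpos (by linarith)
    exact pow_le_pow_left₀ (by positivity) this 2
  -- inner sums
  have hinner : ∀ ε : ℝ, ε = 1 ∨ ε = -1 →
      ∑ j ∈ Finset.Icc 2 g, (Real.sin ((γ 1 + ε * γ j) / 2) ^ 2)⁻¹ ≤
        ((g : ℝ) - 1) * (π / (γ 2 - γ 1)) ^ 2 := by
    intro ε hε
    have := Finset.sum_le_card_nsmul (Finset.Icc 2 g)
      (fun j => (Real.sin ((γ 1 + ε * γ j) / 2) ^ 2)⁻¹)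
      ((π / (γ 2 - γ 1)) ^ 2) (hterm ε hε)
    rw [Nat.card_Icc, nsmul_eq_mul] at this
    have hc : ((g + 1 - 2 : ℕ) : ℝ) = (g : ℝ) - 1 := by
      have : g + 1 - 2 = g - 1 := by omega
      rw [this, Nat.cast_sub (by omega)]; norm_num
    rwa [hc] at this
  set S := ∑ ε ∈ ({1, -1} : Finset ℝ), ∑ j ∈ Finset.Icc 2 g,
      (Real.sin ((γ 1 + ε * γ j) / 2) ^ 2)⁻¹ with hSdef
  have hS : S ≤ 2 * ((g : ℝ) - 1) * (π / (γ 2 - γ 1)) ^ 2 := by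
    rw [hSdef, Finset.sum_pair (by norm_num : (1 : ℝ) ≠ -1)]
    have h1' := hinner 1 (Or.inl rfl)
    have h2'' := hinner (-1) (Or.inr rfl)
    linarith
  have hKnn : (0 : ℝ) ≤ (π / (γ 2 - γ 1)) ^ 2 := by positivity
  have hS3 : S ≤ 12800 * (g : ℝ) ^ 3 / 1521 := by
    have hstep : 2 * ((g : ℝ) - 1) * (π / (γ 2 - γ 1)) ^ 2 ≤
        2 * (g : ℝ) * ((80 * (g : ℝ) / 39) ^ 2) := by
      nlinarith [hK, hKnn, hG]
    calc S ≤ 2 * ((g : ℝ) - 1) * (π / (γ 2 - γ 1)) ^ 2 := hS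
      _ ≤ 2 * (g : ℝ) * ((80 * (g : ℝ) / 39) ^ 2) := hstep
      _ = 12800 * (g : ℝ) ^ 3 / 1521 := by ring
  -- γ1² S ≤ 17/100
  have hSfin : γ 1 ^ 2 * S ≤ 17 / 100 := by
    have h1' : γ 1 ^ 2 * S ≤ γ 1 ^ 2 * (12800 * (g : ℝ) ^ 3 / 1521) :=
      mul_le_mul_of_nonneg_left hS3 (sq_nonneg _)
    have h2'' : γ 1 ^ 2 * (12800 * (g : ℝ) ^ 3 / 1521) =
        (12800 / 760500) * (γ 1 ^ 2 * (500 * (g : ℝ) ^ 3)) := by ring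
    have h3' := mul_le_mul_of_nonneg_left ht2 (by norm_num : (0:ℝ) ≤ 12800 / 760500)
    nlinarith [h1', h3', hπ2]
  -- γ1² csc² γ1 ≤ 251/250
  have hsin : γ 1 - γ 1 ^ 3 / 4 < Real.sin (γ 1) := by
    have := Real.sin_gt_sub_cube hpos; linarith [pow_pos hpos 3]
  have hcube_pos : 0 < γ 1 - γ 1 ^ 3 / 4 := by nlinarith [hpos, hγ1le1]
  have hsinsq : (γ 1 - γ 1 ^ 3 / 4) ^ 2 ≤ Real.sin (γ 1) ^ 2 :=
    pow_le_pow_left₀ hcube_pos.le hsin.le 2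
  have hCinv : (Real.sin (γ 1) ^ 2)⁻¹ ≤ ((γ 1 - γ 1 ^ 3 / 4) ^ 2)⁻¹ :=
    inv_anti₀ (by positivity) hsinsq
  have hC : γ 1 ^ 2 * (Real.sin (γ 1) ^ 2)⁻¹ ≤ 251 / 250 := by
    have hstep : γ 1 ^ 2 * (Real.sin (γ 1) ^ 2)⁻¹ ≤
        γ 1 ^ 2 * ((γ 1 - γ 1 ^ 3 / 4) ^ 2)⁻¹ :=
      mul_le_mul_of_nonneg_left hCinv (sq_nonneg _)
    refine hstep.trans ?_
    rw [← div_eq_mul_inv, div_le_iff₀ (by positivity)]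
    nlinarith [he5, hpos, sq_nonneg (γ 1), sq_nonneg (γ 1 ^ 2)]
  -- assemble
  have hγ1ne : γ 1 ^ 2 ≠ 0 := by positivity
  have hexp : 5 * γ 1 ^ 2 *
      (1 / 6 - 1 / (2 * γ 1 ^ 2) + (1 / 2) * (Real.sin (γ 1) ^ 2)⁻¹ + (1 / 2) * S) =
      5 / 6 * γ 1 ^ 2 - 5 / 2 + 5 / 2 * (γ 1 ^ 2 * (Real.sin (γ 1) ^ 2)⁻¹) +
        5 / 2 * (γ 1 ^ 2 * S) := by
    field_simp
  rw [hexp]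
  nlinarith [hSfin, hC, he5]
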